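/- Let p be prime, k ≥ 2 an integer, and fix d_1,...,d_{k-1} ∈ ℤ/pℤ. For 1 ≤ n ≤ p−1 let J_n := {1,2,...,n} ⊆ ℤ/pℤ and f(n) := |J_n ∩ (J_n+d_1) ∩ ... ∩ (J_n+d_{k-1})|. Then the sequence f is convex: f(n) − f(n−1) ≤ f(n+1) − f(n) for all 2 ≤ n ≤ p−2. -/
import Mathlib


open Finset

theorem stmt4 (p : ℕ) (hp : p.Prime) (k : ℕ) (hk : 2 ≤ k) (d : Fin (k - 1) → ZMod p)
    (J : ℕ → Finset (ZMod p))
    (hJ : ∀ n, J n = (Finset.Icc 1 n).image (Nat.cast : ℕ → ZMod p))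
    (f : ℕ → ℕ)
    (hf : ∀ n, f n = ((J n).filter fun a => ∀ i, a - d i ∈ J n).card)
    (n : ℕ) (h2 : 2 ≤ n) (hn : n ≤ p - 2) :
    f n + f n ≤ f (n - 1) + f (n + 1) := by
  have hp2 := hp.two_le
  haveI : NeZero p := ⟨by omega⟩
  have hnp : n + 1 < p := by omega
  -- cast injectivity below p
  have hcast : ∀ i j : ℕ, i < p → j < p → (i : ZMod p) = (j : ZMod p) → i = j := by
    intro i j hi hj h
    have := congrArg ZMod.val h
    rwa [ZMod.val_cast_of_lt hi, ZMod.val_cast_of_lt hj] at this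
  have hmem : ∀ m (x : ZMod p), x ∈ J m ↔ ∃ j : ℕ, 1 ≤ j ∧ j ≤ m ∧ (j : ZMod p) = x := by
    intro m x
    rw [hJ]
    simp [Finset.mem_image, Finset.mem_Icc]
    tauto
  set S : ℕ → Finset (ZMod p) := fun m => (J m).filter fun a => ∀ i, a - d i ∈ J m with hS
  have hfS : ∀ m, f m = (S m).card := fun m => hf m
  -- monotonicity of J
  have hJmono : ∀ m, J m ⊆ J (m + 1) := by
    intro m
    rw [hJ, hJ]
    exact Finset.image_subset_image (Finset.Icc_subset_Icc_right (by omega))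
  have hSmono : ∀ m, S m ⊆ S (m + 1) := by
    intro m a ha
    rw [Finset.mem_filter] at ha ⊢
    exact ⟨hJmono m ha.1, fun i => hJmono m (ha.2 i)⟩
  -- key facts
  have hsucc : ∀ m, m + 1 < p → ∀ x ∈ J m, x + 1 ∈ J (m + 1) := by
    intro m hm x hx
    rw [hmem] at hx
    obtain ⟨j, hj1, hj2, rfl⟩ := hx
    rw [hmem]
    exact ⟨j + 1, by omega, by omega, by push_cast; ring⟩
  have hnot : ((n + 1 : ℕ) : ZMod p) ∉ J n := by
    rw [hmem]
    rintro ⟨j, hj1, hj2, hj⟩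
    have := hcast j (n + 1) (by omega) hnp hj
    omega
  have hlast : ∀ x ∈ J n, x ∉ J (n - 1) → x = ((n : ℕ) : ZMod p) := by
    intro x hx hx'
    rw [hmem] at hx
    obtain ⟨j, hj1, hj2, rfl⟩ := hx
    rcases Nat.lt_or_ge j n with h | h
    · exact absurd ((hmem _ _).2 ⟨j, hj1, by omega, rfl⟩) hx'
    · have : j = n := by omega
      rw [this]
  -- the injection
  have key : ∀ a ∈ S n \ S (n - 1), a + 1 ∈ S (n + 1) \ S n := by
    intro a ha
    rw [Finset.mem_sdiff] at ha ⊢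
    obtain ⟨haS, haN⟩ := ha
    rw [Finset.mem_filter] at haS
    obtain ⟨haJ, had⟩ := haS
    -- a+1 ∈ S (n+1)
    have h1 : a + 1 ∈ S (n + 1) := by
      rw [Finset.mem_filter]
      refine ⟨hsucc n hnp a haJ, fun i => ?_⟩
      have : a + 1 - d i = (a - d i) + 1 := by ring
      rw [this]
      exact hsucc n hnp _ (had i)
    refine ⟨h1, ?_⟩
    -- a+1 ∉ S n : some coordinate equals (n+1 : ZMod p)
    have hbad : a = ((n : ℕ) : ZMod p) ∨ ∃ i, a - d i = ((n : ℕ) : ZMod p) := by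
      by_cases hcase : a ∈ J (n - 1)
      · have : ¬ ∀ i, a - d i ∈ J (n - 1) := by
          intro hall
          exact haN (Finset.mem_filter.2 ⟨hcase, hall⟩)
        push_neg at this
        obtain ⟨i, hi⟩ := this
        exact Or.inr ⟨i, hlast _ (had i) hi⟩
      · exact Or.inl (hlast a haJ hcase)
    intro hmemSn
    rw [Finset.mem_filter] at hmemSn
    rcases hbad with h | ⟨i, h⟩
    · apply hnot
      have : a + 1 = ((n + 1 : ℕ) : ZMod p) := by rw [h]; push_cast; ring
      rw [← this]
      exact hmemSn.1
    · apply hnot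
      have : a + 1 - d i = ((n + 1 : ℕ) : ZMod p) := by
        have : a + 1 - d i = (a - d i) + 1 := by ring
        rw [this, h]; push_cast; ring
      rw [← this]
      exact hmemSn.2 i
  have hinj : (S n \ S (n - 1)).card ≤ (S (n + 1) \ S n).card := by
    apply Finset.card_le_card_of_injOn (fun a => a + 1) key
    intro x _ y _ h
    simpa using h
  have hsub1 : S (n - 1) ⊆ S n := by
    have h := hSmono (n - 1)
    have : n - 1 + 1 = n := by omega
    rwa [this] at h
  have e1 : (S n \ S (n - 1)).card = (S n).card - (S (n - 1)).card :=
    Finset.card_sdiff_of_subset hsub1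
  have e2 : (S (n + 1) \ S n).card = (S (n + 1)).card - (S n).card :=
    Finset.card_sdiff_of_subset (hSmono n)
  have le1 : (S (n - 1)).card ≤ (S n).card := Finset.card_le_card hsub1
  have le2 : (S n).card ≤ (S (n + 1)).card := Finset.card_le_card (hSmono n)
  rw [hfS, hfS, hfS]
  omega
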